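/- Define on the vector space with basis {L_m : m ≥ −1} ∪ {W_n : n ≥ 0} the brackets [L_m, L_n] = (m−n)L_{m+n}, [L_m, W_n] = ((a−1)(m+1) − n)W_{m+n} + b·W_{m+n+1}, [W_m, W_n] = 0 (with W_{−1} = 0 and terms with index out of range interpreted as 0 when appropriate). Then these brackets satisfy the Jacobi identity, so they define a Lie algebra structure. -/

import Mathlib

noncomputable section

/-- Index set of the annihilation algebra `Lie(W(a,b))⁺`:
`L_m` for `m ≥ -1` and `W_n` for `n ≥ 0`. -/
abbrev WIdx : Type := {m : ℤ // -1 ≤ m} ⊕ {n : ℤ // 0 ≤ n}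

/-- The underlying vector space, with basis `{L_m : m ≥ -1} ∪ {W_n : n ≥ 0}`. -/
abbrev WSp : Type := WIdx →₀ ℂ

/-- The basis vector `L_m` (interpreted as `0` when `m < -1`). -/
def Lgen (m : ℤ) : WSp := if h : -1 ≤ m then Finsupp.single (Sum.inl ⟨m, h⟩) 1 else 0

/-- The basis vector `W_n` (interpreted as `0` when `n < 0`). -/
def Wgen (n : ℤ) : WSp := if h : 0 ≤ n then Finsupp.single (Sum.inr ⟨n, h⟩) 1 else 0

/-- The bracket on basis elements:
`[L_m, L_n] = (m−n)L_{m+n}`,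
`[L_m, W_n] = ((a−1)(m+1) − n)W_{m+n} + b·W_{m+n+1}`,
`[W_m, W_n] = 0`, out-of-range generators being `0`. -/
def brW (a b : ℂ) : WIdx → WIdx → WSp
  | Sum.inl m, Sum.inl n => (((m.1 : ℂ) - (n.1 : ℂ))) • Lgen (m.1 + n.1)
  | Sum.inl m, Sum.inr n =>
      ((a - 1) * ((m.1 : ℂ) + 1) - (n.1 : ℂ)) • Wgen (m.1 + n.1) + b • Wgen (m.1 + n.1 + 1)
  | Sum.inr n, Sum.inl m =>
      -(((a - 1) * ((m.1 : ℂ) + 1) - (n.1 : ℂ)) • Wgen (m.1 + n.1) + b • Wgen (m.1 + n.1 + 1))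
  | Sum.inr _, Sum.inr _ => 0

/-- The bilinear extension of the bracket to the whole space. -/
def bracketW (a b : ℂ) (x y : WSp) : WSp :=
  x.sum fun i c => y.sum fun j d => (c * d) • brW a b i j

section jacobi
variable (a b : ℂ)

lemma br_zero_right (x : WSp) : bracketW a b x 0 = 0 := by
  simp [bracketW]

lemma br_zero_left (y : WSp) : bracketW a b 0 y = 0 := by
  simp [bracketW]

lemma br_add_right (x y z : WSp) :
    bracketW a b x (y + z) = bracketW a b x y + bracketW a b x z := by
  unfold bracketW
  rw [← Finsupp.sum_add]
  congr 1; funext i c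
  exact Finsupp.sum_add_index' (by simp) (by intros; rw [mul_add, add_smul])

lemma br_add_left (x y z : WSp) :
    bracketW a b (x + y) z = bracketW a b x z + bracketW a b y z := by
  unfold bracketW
  refine Finsupp.sum_add_index' (by simp) ?_
  intro i c₁ c₂
  rw [← Finsupp.sum_add]
  congr 1; funext j d
  rw [add_mul, add_smul]

lemma br_smul_right (t : ℂ) (x y : WSp) :
    bracketW a b x (t • y) = t • bracketW a b x y := by
  unfold bracketW
  rw [Finsupp.smul_sum]
  congr 1; funext i c
  rw [Finsupp.smul_sum, Finsupp.sum_smul_index' (by simp)]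
  congr 1; funext j d
  rw [smul_eq_mul, smul_smul]; ring_nf

lemma br_smul_left (t : ℂ) (x y : WSp) :
    bracketW a b (t • x) y = t • bracketW a b x y := by
  unfold bracketW
  rw [Finsupp.smul_sum, Finsupp.sum_smul_index' (by simp)]
  congr 1; funext i c
  rw [Finsupp.smul_sum]
  congr 1; funext j d
  rw [smul_eq_mul, smul_smul, mul_assoc]

lemma br_single_single (i j : WIdx) :
    bracketW a b (Finsupp.single i 1) (Finsupp.single j 1) = brW a b i j := by
  unfold bracketW
  rw [Finsupp.sum_single_index (by simp), Finsupp.sum_single_index (by simp)]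
  simp

lemma Lgen_neg {m : ℤ} (h : m < -1) : Lgen m = 0 := by
  rw [Lgen, dif_neg]; omega

lemma Wgen_neg {n : ℤ} (h : n < 0) : Wgen n = 0 := by
  rw [Wgen, dif_neg]; omega

lemma bLL {m n : ℤ} (hm : -1 ≤ m) (hn : -1 ≤ n) :
    bracketW a b (Lgen m) (Lgen n) = ((m : ℂ) - (n : ℂ)) • Lgen (m + n) := by
  rw [Lgen, dif_pos hm, Lgen, dif_pos hn, br_single_single]
  rfl

lemma bLW {m n : ℤ} (hm : -1 ≤ m) (hn : 0 ≤ n) :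
    bracketW a b (Lgen m) (Wgen n) =
      ((a - 1) * ((m : ℂ) + 1) - (n : ℂ)) • Wgen (m + n) + b • Wgen (m + n + 1) := by
  rw [Lgen, dif_pos hm, Wgen, dif_pos hn, br_single_single]
  rfl

lemma bWL {m n : ℤ} (hm : 0 ≤ m) (hn : -1 ≤ n) :
    bracketW a b (Wgen m) (Lgen n) =
      -(((a - 1) * ((n : ℂ) + 1) - (m : ℂ)) • Wgen (n + m) + b • Wgen (n + m + 1)) := by
  rw [Lgen, dif_pos hn, Wgen, dif_pos hm, br_single_single]
  rfl

lemma bWW (m n : ℤ) : bracketW a b (Wgen m) (Wgen n) = 0 := by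
  by_cases hn : 0 ≤ n
  · by_cases hm : 0 ≤ m
    · unfold Wgen
      rw [dif_pos hm, dif_pos hn, br_single_single]; rfl
    · rw [Wgen_neg (by omega : m < 0), br_zero_left]
  · rw [Wgen_neg (by omega : n < 0), br_zero_right]

lemma jacLLL {m n p : ℤ} (hm : -1 ≤ m) (hn : -1 ≤ n) (hp : -1 ≤ p) :
    bracketW a b (Lgen m) (bracketW a b (Lgen n) (Lgen p)) =
      bracketW a b (bracketW a b (Lgen m) (Lgen n)) (Lgen p) +
        bracketW a b (Lgen n) (bracketW a b (Lgen m) (Lgen p)) := by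
  rw [bLL a b hn hp, bLL a b hm hn, bLL a b hm hp, br_smul_right, br_smul_left, br_smul_right]
  by_cases h1 : -1 ≤ n + p
  · rw [bLL a b hm h1]
    by_cases h2 : -1 ≤ m + n
    · rw [bLL a b h2 hp]
      by_cases h3 : -1 ≤ m + p
      · rw [bLL a b hn h3,
          show m + (n + p) = m + n + p from by ring, show n + (m + p) = m + n + p from by ring]
        push_cast
        match_scalars <;> ring
      · obtain ⟨rfl, rfl⟩ : m = -1 ∧ p = -1 := by omega
        simp only [show Lgen ((-1 : ℤ) + -1) = 0 from Lgen_neg (by norm_num),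
          br_zero_right, smul_zero, add_zero]
        rw [show (-1 : ℤ) + (n + -1) = -1 + n + -1 from by ring]
        push_cast
        match_scalars <;> ring
    · obtain ⟨rfl, rfl⟩ : m = -1 ∧ n = -1 := by omega
      have h3 : (-1 : ℤ) ≤ -1 + p := by omega
      simp only [show Lgen ((-1 : ℤ) + -1) = 0 from Lgen_neg (by norm_num),
        br_zero_left, smul_zero, zero_add]
      rw [bLL a b (by norm_num) h3]
  · obtain ⟨rfl, rfl⟩ : n = -1 ∧ p = -1 := by omega
    simp only [show Lgen ((-1 : ℤ) + -1) = 0 from Lgen_neg (by norm_num),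
      br_zero_right, smul_zero]
    by_cases h2 : -1 ≤ m + -1
    · rw [bLL a b h2 (by norm_num : (-1 : ℤ) ≤ -1), bLL a b (by norm_num : (-1 : ℤ) ≤ -1) h2,
        show (-1 : ℤ) + (m + -1) = m + -1 + -1 from by ring]
      push_cast
      match_scalars <;> ring
    · obtain rfl : m = -1 := by omega
      simp only [show Lgen ((-1 : ℤ) + -1) = 0 from Lgen_neg (by norm_num),
        br_zero_left, br_zero_right, smul_zero, add_zero]
lemma br_neg_right (x y : WSp) : bracketW a b x (-y) = -bracketW a b x y := by
  rw [← neg_one_smul ℂ y, br_smul_right, neg_one_smul]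

lemma br_neg_left (x y : WSp) : bracketW a b (-x) y = -bracketW a b x y := by
  rw [← neg_one_smul ℂ x, br_smul_left, neg_one_smul]

lemma jacLLW {m n p : ℤ} (hm : -1 ≤ m) (hn : -1 ≤ n) (hp : 0 ≤ p) :
    bracketW a b (Lgen m) (bracketW a b (Lgen n) (Wgen p)) =
      bracketW a b (bracketW a b (Lgen m) (Lgen n)) (Wgen p) +
        bracketW a b (Lgen n) (bracketW a b (Lgen m) (Wgen p)) := by
  rw [bLW a b hn hp, bLW a b hm hp, bLL a b hm hn]
  simp only [br_add_right, br_smul_right, br_smul_left]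
  by_cases h1 : 0 ≤ n + p
  · rw [bLW a b hm h1, bLW a b hm (show (0:ℤ) ≤ n + p + 1 by omega)]
    by_cases h2 : -1 ≤ m + n
    · rw [bLW a b h2 hp]
      by_cases h3 : 0 ≤ m + p
      · rw [bLW a b hn h3, bLW a b hn (show (0:ℤ) ≤ m + p + 1 by omega)]
        push_cast; ring_nf
        match_scalars <;> ring
      · obtain ⟨rfl, rfl⟩ : m = -1 ∧ p = 0 := by omega
        simp only [show Wgen ((-1:ℤ) + 0) = 0 from Wgen_neg (by norm_num),
          br_zero_right, smul_zero]
        rw [bLW a b hn (show (0:ℤ) ≤ -1 + 0 + 1 by norm_num)]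
        push_cast; ring_nf
        match_scalars <;> ring
    · obtain ⟨rfl, rfl⟩ : m = -1 ∧ n = -1 := by omega
      have h3 : (0:ℤ) ≤ -1 + p := by omega
      simp only [show Lgen ((-1:ℤ) + -1) = 0 from Lgen_neg (by norm_num),
        br_zero_left, smul_zero]
      rw [bLW a b hn h3, bLW a b hn (show (0:ℤ) ≤ -1 + p + 1 by omega)]
      push_cast; ring_nf
      match_scalars <;> ring
  · obtain ⟨rfl, rfl⟩ : n = -1 ∧ p = 0 := by omega
    simp only [show Wgen ((-1:ℤ) + 0) = 0 from Wgen_neg (by norm_num),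
      br_zero_right, smul_zero]
    rw [bLW a b hm (show (0:ℤ) ≤ -1 + 0 + 1 by norm_num)]
    by_cases h2 : -1 ≤ m + -1
    · rw [bLW a b h2 hp, bLW a b hn (show (0:ℤ) ≤ m + 0 by omega),
        bLW a b hn (show (0:ℤ) ≤ m + 0 + 1 by omega)]
      push_cast; ring_nf
      match_scalars <;> ring
    · obtain rfl : m = -1 := by omega
      rw [bLW a b (show (-1:ℤ) ≤ -1 by norm_num) (show (0:ℤ) ≤ -1 + 0 + 1 by norm_num)]
      simp only [show Lgen ((-1:ℤ) + -1) = 0 from Lgen_neg (by norm_num),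
        show Wgen ((-1:ℤ) + 0) = 0 from Wgen_neg (by norm_num),
        show Wgen ((-1:ℤ) + (-1 + 0 + 1)) = 0 from Wgen_neg (by norm_num),
        br_zero_left, br_zero_right, smul_zero]
      push_cast; ring_nf
      match_scalars <;> ring
lemma jacLWL {m n p : ℤ} (hm : -1 ≤ m) (hn : 0 ≤ n) (hp : -1 ≤ p) :
    bracketW a b (Lgen m) (bracketW a b (Wgen n) (Lgen p)) =
      bracketW a b (bracketW a b (Lgen m) (Wgen n)) (Lgen p) +
        bracketW a b (Wgen n) (bracketW a b (Lgen m) (Lgen p)) := by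
  rw [bWL a b hn hp, bLW a b hm hn, bLL a b hm hp]
  simp only [br_neg_right, br_add_right, br_smul_right, br_add_left, br_smul_left]
  by_cases h1 : 0 ≤ p + n
  · rw [bLW a b hm h1, bLW a b hm (show (0:ℤ) ≤ p + n + 1 by omega)]
    by_cases h2 : 0 ≤ m + n
    · rw [bWL a b h2 hp, bWL a b (show (0:ℤ) ≤ m + n + 1 by omega) hp]
      by_cases h3 : -1 ≤ m + p
      · rw [bWL a b hn h3]
        push_cast; ring_nf
        match_scalars <;> ring
      · obtain ⟨rfl, rfl⟩ : m = -1 ∧ p = -1 := by omega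
        simp only [show Lgen ((-1:ℤ) + -1) = 0 from Lgen_neg (by norm_num),
          br_zero_right, smul_zero]
        push_cast; ring_nf
        match_scalars <;> ring
    · obtain ⟨rfl, rfl⟩ : m = -1 ∧ n = 0 := by omega
      have h3 : (-1:ℤ) ≤ -1 + p := by omega
      rw [bWL a b hn h3, bWL a b (show (0:ℤ) ≤ -1 + 0 + 1 by norm_num) hp]
      simp only [show Wgen ((-1:ℤ) + 0) = 0 from Wgen_neg (by norm_num),
        br_zero_left, smul_zero]
      push_cast; ring_nf
      match_scalars <;> ring
  · obtain ⟨rfl, rfl⟩ : p = -1 ∧ n = 0 := by omega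
    rw [bLW a b hm (show (0:ℤ) ≤ -1 + 0 + 1 by norm_num)]
    simp only [show Wgen ((-1:ℤ) + 0) = 0 from Wgen_neg (by norm_num),
      br_zero_right, smul_zero]
    by_cases h2 : 0 ≤ m + 0
    · rw [bWL a b h2 hp, bWL a b (show (0:ℤ) ≤ m + 0 + 1 by omega) hp]
      by_cases h3 : -1 ≤ m + -1
      · rw [bWL a b hn h3]
        push_cast; ring_nf
        match_scalars <;> ring
      · exact absurd h3 (by omega)
    · obtain rfl : m = -1 := by omega
      simp only [show Lgen ((-1:ℤ) + -1) = 0 from Lgen_neg (by norm_num),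
        show Wgen ((-1:ℤ) + 0) = 0 from Wgen_neg (by norm_num),
        br_zero_left, br_zero_right, smul_zero]
      rw [bWL a b (show (0:ℤ) ≤ -1 + 0 + 1 by norm_num) hp]
      simp only [show Wgen ((-1:ℤ) + (-1 + 0 + 1)) = 0 from Wgen_neg (by norm_num), smul_zero]
      match_scalars <;> ring

lemma jacWLL {m n p : ℤ} (hm : 0 ≤ m) (hn : -1 ≤ n) (hp : -1 ≤ p) :
    bracketW a b (Wgen m) (bracketW a b (Lgen n) (Lgen p)) =
      bracketW a b (bracketW a b (Wgen m) (Lgen n)) (Lgen p) +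
        bracketW a b (Lgen n) (bracketW a b (Wgen m) (Lgen p)) := by
  rw [bLL a b hn hp, bWL a b hm hn, bWL a b hm hp]
  simp only [br_neg_right, br_neg_left, br_add_right, br_add_left, br_smul_right, br_smul_left]
  by_cases h1 : -1 ≤ n + p
  · rw [bWL a b hm h1]
    by_cases h2 : 0 ≤ n + m
    · rw [bWL a b h2 hp, bWL a b (show (0:ℤ) ≤ n + m + 1 by omega) hp]
      by_cases h3 : 0 ≤ p + m
      · rw [bLW a b hn h3, bLW a b hn (show (0:ℤ) ≤ p + m + 1 by omega)]
        push_cast; ring_nf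
        match_scalars <;> ring
      · obtain ⟨rfl, rfl⟩ : p = -1 ∧ m = 0 := by omega
        rw [bLW a b hn (show (0:ℤ) ≤ -1 + 0 + 1 by norm_num)]
        simp only [show Wgen ((-1:ℤ) + 0) = 0 from Wgen_neg (by norm_num),
          br_zero_right, smul_zero]
        push_cast; ring_nf
        match_scalars <;> ring
    · obtain ⟨rfl, rfl⟩ : n = -1 ∧ m = 0 := by omega
      rw [bWL a b (show (0:ℤ) ≤ -1 + 0 + 1 by norm_num) hp]
      have h3 : (0:ℤ) ≤ p + 0 := by omega
      rw [bLW a b hn h3, bLW a b hn (show (0:ℤ) ≤ p + 0 + 1 by omega)]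
      simp only [show Wgen ((-1:ℤ) + 0) = 0 from Wgen_neg (by norm_num),
        br_zero_left, smul_zero]
      push_cast; ring_nf
      match_scalars <;> ring
  · obtain ⟨rfl, rfl⟩ : n = -1 ∧ p = -1 := by omega
    simp only [show Lgen ((-1:ℤ) + -1) = 0 from Lgen_neg (by norm_num),
      br_zero_right, smul_zero]
    by_cases h2 : 0 ≤ -1 + m
    · rw [bWL a b h2 hp, bWL a b (show (0:ℤ) ≤ -1 + m + 1 by omega) hp,
        bLW a b hn h2, bLW a b hn (show (0:ℤ) ≤ -1 + m + 1 by omega)]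
      push_cast; ring_nf
      match_scalars <;> ring
    · obtain rfl : m = 0 := by omega
      rw [bWL a b (show (0:ℤ) ≤ -1 + 0 + 1 by norm_num) hp,
        bLW a b hn (show (0:ℤ) ≤ -1 + 0 + 1 by norm_num)]
      simp only [show Wgen ((-1:ℤ) + 0) = 0 from Wgen_neg (by norm_num),
        br_zero_left, br_zero_right, smul_zero]
      push_cast; ring_nf
      match_scalars <;> ring

lemma jacLWW {m n p : ℤ} (hm : -1 ≤ m) (hn : 0 ≤ n) (hp : 0 ≤ p) :
    bracketW a b (Lgen m) (bracketW a b (Wgen n) (Wgen p)) =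
      bracketW a b (bracketW a b (Lgen m) (Wgen n)) (Wgen p) +
        bracketW a b (Wgen n) (bracketW a b (Lgen m) (Wgen p)) := by
  rw [bWW, br_zero_right, bLW a b hm hn, bLW a b hm hp]
  simp only [br_add_left, br_smul_left, br_add_right, br_smul_right, bWW, smul_zero, add_zero]

lemma jacWLW {m n p : ℤ} (hm : 0 ≤ m) (hn : -1 ≤ n) (hp : 0 ≤ p) :
    bracketW a b (Wgen m) (bracketW a b (Lgen n) (Wgen p)) =
      bracketW a b (bracketW a b (Wgen m) (Lgen n)) (Wgen p) +
        bracketW a b (Lgen n) (bracketW a b (Wgen m) (Wgen p)) := by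
  rw [bLW a b hn hp, bWL a b hm hn, bWW, br_zero_right]
  simp only [br_neg_left, br_add_left, br_smul_left, br_add_right, br_smul_right, bWW,
    smul_zero, add_zero, neg_zero]

lemma jacWWL {m n p : ℤ} (hm : 0 ≤ m) (hn : 0 ≤ n) (hp : -1 ≤ p) :
    bracketW a b (Wgen m) (bracketW a b (Wgen n) (Lgen p)) =
      bracketW a b (bracketW a b (Wgen m) (Wgen n)) (Lgen p) +
        bracketW a b (Wgen n) (bracketW a b (Wgen m) (Lgen p)) := by
  rw [bWL a b hn hp, bWL a b hm hp, bWW, br_zero_left]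
  simp only [br_neg_right, br_add_right, br_smul_right, bWW, smul_zero, add_zero, neg_zero]

lemma jacWWW {m n p : ℤ} :
    bracketW a b (Wgen m) (bracketW a b (Wgen n) (Wgen p)) =
      bracketW a b (bracketW a b (Wgen m) (Wgen n)) (Wgen p) +
        bracketW a b (Wgen n) (bracketW a b (Wgen m) (Wgen p)) := by
  rw [bWW, bWW, bWW, br_zero_right, br_zero_left, br_zero_right, add_zero]

lemma jac_gen (i j k : WIdx) :
    bracketW a b (Finsupp.single i 1) (bracketW a b (Finsupp.single j 1) (Finsupp.single k 1)) =
      bracketW a b (bracketW a b (Finsupp.single i 1) (Finsupp.single j 1)) (Finsupp.single k 1) +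
        bracketW a b (Finsupp.single j 1)
          (bracketW a b (Finsupp.single i 1) (Finsupp.single k 1)) := by
  have hL : ∀ (m : ℤ) (h : -1 ≤ m),
      Finsupp.single (Sum.inl ⟨m, h⟩ : WIdx) (1 : ℂ) = Lgen m := by
    intro m h; rw [Lgen, dif_pos h]
  have hW : ∀ (n : ℤ) (h : 0 ≤ n),
      Finsupp.single (Sum.inr ⟨n, h⟩ : WIdx) (1 : ℂ) = Wgen n := by
    intro n h; rw [Wgen, dif_pos h]
  obtain (⟨m, hm⟩ | ⟨m, hm⟩) := i <;> obtain (⟨n, hn⟩ | ⟨n, hn⟩) := j <;>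
    obtain (⟨p, hp⟩ | ⟨p, hp⟩) := k <;>
    simp only [hL, hW]
  · exact jacLLL a b hm hn hp
  · exact jacLLW a b hm hn hp
  · exact jacLWL a b hm hn hp
  · exact jacLWW a b hm hn hp
  · exact jacWLL a b hm hn hp
  · exact jacWLW a b hm hn hp
  · exact jacWWL a b hm hn hp
  · exact jacWWW a b

lemma jac_single (i j k : WIdx) (c d e : ℂ) :
    bracketW a b (Finsupp.single i c) (bracketW a b (Finsupp.single j d) (Finsupp.single k e)) =
      bracketW a b (bracketW a b (Finsupp.single i c) (Finsupp.single j d)) (Finsupp.single k e) +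
        bracketW a b (Finsupp.single j d)
          (bracketW a b (Finsupp.single i c) (Finsupp.single k e)) := by
  have hs : ∀ (i : WIdx) (c : ℂ), Finsupp.single i c = c • Finsupp.single i 1 := by
    intro i c; rw [Finsupp.smul_single, smul_eq_mul, mul_one]
  rw [hs i c, hs j d, hs k e]
  simp only [br_smul_left, br_smul_right]
  rw [jac_gen a b i j k]
  simp only [smul_add]
  match_scalars <;> ring

end jacobi

/-- the brackets of the annihilation algebra of `W(a,b)`
satisfy the Jacobi identity (in Leibniz form). -/
theorem stmt3 (a b : ℂ) (x y z : WSp) :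
    bracketW a b x (bracketW a b y z) =
      bracketW a b (bracketW a b x y) z + bracketW a b y (bracketW a b x z) := by
  induction x using Finsupp.induction_linear with
  | zero => simp only [br_zero_left, br_zero_right, add_zero]
  | add f g hf hg =>
    simp only [br_add_left, br_add_right, hf, hg]
    abel
  | single i c =>
    induction y using Finsupp.induction_linear with
    | zero => simp only [br_zero_left, br_zero_right, zero_add]
    | add f g hf hg =>
      simp only [br_add_left, br_add_right, hf, hg]
      abel
    | single j d =>
      induction z using Finsupp.induction_linear with
      | zero => simp only [br_zero_left, br_zero_right, add_zero]
      | add f g hf hg =>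
        simp only [br_add_left, br_add_right, hf, hg]
        abel
      | single k e => exact jac_single a b i j k c d e

end
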